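/- For θ₁, θ₂ ∈ (0,1), expanding the dominant root λ_{1+δ}(θ₁,θ₂) of the cubic λ³ = ((1-θ₁)^{1+δ}λ + θ₁^{1+δ})((1-θ₂)^{1+δ}λ + θ₂^{1+δ}) around δ = 0 gives λ_{1+δ} = 1 + δ/(1+θ₁+θ₂) · Σ_{j=1,2} (θ_j log θ_j + (1-θ_j) log(1-θ_j)) + O(δ²). In particular λ₁(θ₁,θ₂) = 1 and the derivative of z ↦ λ_z(θ₁,θ₂) at z = 1 equals (Σ_j θ_j log θ_j + (1-θ_j)log(1-θ_j))/(1+θ₁+θ₂). -/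
import Mathlib


/-- The positive root λ_z of the continued cubic satisfies λ₁ = 1 and its derivative
at z = 1 equals (Σ_j θ_j log θ_j + (1-θ_j) log(1-θ_j))/(1+θ₁+θ₂). -/
theorem stmt10 (θ₁ θ₂ : ℝ) (hθ₁ : θ₁ ∈ Set.Ioo (0:ℝ) 1) (hθ₂ : θ₂ ∈ Set.Ioo (0:ℝ) 1)
    (lam : ℝ → ℝ) (d : ℝ)
    (hroot : ∀ z : ℝ, 0 < z → 0 < lam z ∧
      (lam z) ^ 3 = ((1 - θ₁) ^ z * lam z + θ₁ ^ z) * ((1 - θ₂) ^ z * lam z + θ₂ ^ z))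
    (hd : HasDerivAt lam d 1) :
    lam 1 = 1 ∧
      d = (θ₁ * Real.log θ₁ + (1 - θ₁) * Real.log (1 - θ₁)
          + θ₂ * Real.log θ₂ + (1 - θ₂) * Real.log (1 - θ₂)) / (1 + θ₁ + θ₂) := by
  obtain ⟨h1a, h1b⟩ := hθ₁
  obtain ⟨h2a, h2b⟩ := hθ₂
  have h1c : (0:ℝ) < 1 - θ₁ := by linarith
  have h2c : (0:ℝ) < 1 - θ₂ := by linarith
  obtain ⟨hLpos, hLeq⟩ := hroot 1 one_pos
  rw [Real.rpow_one, Real.rpow_one, Real.rpow_one, Real.rpow_one] at hLeq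
  have hfac : (lam 1 - 1) * ((lam 1)^2 + (θ₁+θ₂-θ₁*θ₂)*(lam 1) + θ₁*θ₂) = 0 := by
    linear_combination hLeq
  have hpos : 0 < (lam 1)^2 + (θ₁+θ₂-θ₁*θ₂)*(lam 1) + θ₁*θ₂ := by
    have h3 : (0:ℝ) < θ₁+θ₂-θ₁*θ₂ := by nlinarith
    nlinarith [mul_pos h3 hLpos, mul_pos h1a h2a, mul_pos hLpos hLpos]
  have hL1 : lam 1 = 1 := by
    rcases mul_eq_zero.mp hfac with h | h
    · linarith
    · linarith
  refine ⟨hL1, ?_⟩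
  have hDa : HasDerivAt (fun z : ℝ => (1-θ₁) ^ z) ((1-θ₁)^(1:ℝ) * Real.log (1-θ₁)) 1 :=
    (Real.hasStrictDerivAt_const_rpow h1c 1).hasDerivAt
  have hDb : HasDerivAt (fun z : ℝ => (1-θ₂) ^ z) ((1-θ₂)^(1:ℝ) * Real.log (1-θ₂)) 1 :=
    (Real.hasStrictDerivAt_const_rpow h2c 1).hasDerivAt
  have hDp : HasDerivAt (fun z : ℝ => θ₁ ^ z) (θ₁^(1:ℝ) * Real.log θ₁) 1 :=
    (Real.hasStrictDerivAt_const_rpow h1a 1).hasDerivAt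
  have hDq : HasDerivAt (fun z : ℝ => θ₂ ^ z) (θ₂^(1:ℝ) * Real.log θ₂) 1 :=
    (Real.hasStrictDerivAt_const_rpow h2a 1).hasDerivAt
  have hu : HasDerivAt (fun z : ℝ => (1-θ₁) ^ z * lam z + θ₁ ^ z)
      (((1-θ₁)^(1:ℝ) * Real.log (1-θ₁)) * lam 1 + (1-θ₁)^(1:ℝ) * d + θ₁^(1:ℝ) * Real.log θ₁) 1 :=
    (hDa.mul hd).add hDp
  have hv : HasDerivAt (fun z : ℝ => (1-θ₂) ^ z * lam z + θ₂ ^ z)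
      (((1-θ₂)^(1:ℝ) * Real.log (1-θ₂)) * lam 1 + (1-θ₂)^(1:ℝ) * d + θ₂^(1:ℝ) * Real.log θ₂) 1 :=
    (hDb.mul hd).add hDq
  have hF : HasDerivAt (fun z : ℝ => (lam z)^3 -
      ((1 - θ₁) ^ z * lam z + θ₁ ^ z) * ((1 - θ₂) ^ z * lam z + θ₂ ^ z))
      ((3 : ℕ) * lam 1 ^ (3-1) * d -
        ((((1-θ₁)^(1:ℝ) * Real.log (1-θ₁)) * lam 1 + (1-θ₁)^(1:ℝ) * d + θ₁^(1:ℝ) * Real.log θ₁) *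
          ((1-θ₂)^(1:ℝ) * lam 1 + θ₂^(1:ℝ)) +
         ((1-θ₁)^(1:ℝ) * lam 1 + θ₁^(1:ℝ)) *
          (((1-θ₂)^(1:ℝ) * Real.log (1-θ₂)) * lam 1 + (1-θ₂)^(1:ℝ) * d + θ₂^(1:ℝ) * Real.log θ₂))) 1 :=
    (hd.pow 3).sub (hu.mul hv)
  have hF0 : HasDerivAt (fun z : ℝ => (lam z)^3 -
      ((1 - θ₁) ^ z * lam z + θ₁ ^ z) * ((1 - θ₂) ^ z * lam z + θ₂ ^ z)) 0 1 := by
    have heq : (fun z : ℝ => (lam z)^3 -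
        ((1 - θ₁) ^ z * lam z + θ₁ ^ z) * ((1 - θ₂) ^ z * lam z + θ₂ ^ z)) =ᶠ[nhds 1]
        (fun _ => (0:ℝ)) := by
      filter_upwards [eventually_gt_nhds (by norm_num : (0:ℝ) < 1)] with z hz
      have := (hroot z hz).2
      simp [this]
    exact (hasDerivAt_const (1:ℝ) (0:ℝ)).congr_of_eventuallyEq heq
  have hkey := hF.unique hF0
  rw [hL1] at hkey
  simp only [Real.rpow_one] at hkey
  have hne : (1 : ℝ) + θ₁ + θ₂ ≠ 0 := by linarith
  norm_num at hkey
  field_simp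
  linear_combination hkey
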